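/- Let α > 0 and let G₁, G₂ be Borel probability measures on ℝ supported on the open interval (0,1), mutually absolutely continuous, whose Radon–Nikodym derivative dG₁/dG₂ equals the function r ↦ α(1−r)/r, G₂-almost everywhere. If G₁ ≠ G₂, then the means satisfy ∫ r dG₁(r) < ∫ r dG₂(r). -/

import Mathlib

open MeasureTheory

/-- Part (3) of Lemma A.3: if `dG₁/dG₂ (r) = α(1−r)/r` and `G₁ ≠ G₂`, then the
mean of `G₁` is strictly smaller than the mean of `G₂`. -/
theorem bayes_mean_strict_lt
    {α : ℝ} (hα : 0 < α)
    (G₁ G₂ : Measure ℝ) [IsProbabilityMeasure G₁] [IsProbabilityMeasure G₂]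
    (hsupp₁ : G₁ (Set.Ioo (0 : ℝ) 1)ᶜ = 0) (hsupp₂ : G₂ (Set.Ioo (0 : ℝ) 1)ᶜ = 0)
    (hac₁ : G₁ ≪ G₂) (hac₂ : G₂ ≪ G₁)
    (hrn : G₁.rnDeriv G₂ =ᵐ[G₂] fun r => ENNReal.ofReal (α * ((1 - r) / r)))
    (hne : G₁ ≠ G₂) :
    (∫ r, r ∂G₁) < ∫ r, r ∂G₂ := by
  set d : ℝ → ℝ := fun r => α * ((1 - r) / r) with hd_def
  have h2 : ∀ᵐ r ∂G₂, r ∈ Set.Ioo (0:ℝ) 1 := by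
    rw [MeasureTheory.ae_iff]
    exact hsupp₂
  have hd_nonneg : ∀ᵐ r ∂G₂, 0 ≤ d r := by
    filter_upwards [h2] with r hr
    exact mul_nonneg hα.le (div_nonneg (by linarith [hr.2]) hr.1.le)
  have htr : (fun r => (G₁.rnDeriv G₂ r).toReal) =ᵐ[G₂] d := by
    filter_upwards [hrn, hd_nonneg] with r h1 h0
    rw [h1, ENNReal.toReal_ofReal h0]
  have hd_int : Integrable d G₂ :=
    (Measure.integrable_toReal_rnDeriv (μ := G₁) (ν := G₂)).congr htr
  have hd_sum : ∫ r, d r ∂G₂ = 1 := by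
    rw [← integral_congr_ae htr, Measure.integral_toReal_rnDeriv hac₁]
    simp
  have hr_int₂ : Integrable (fun r : ℝ => r) G₂ := by
    refine Integrable.mono' (integrable_const (1:ℝ)) measurable_id.aestronglyMeasurable ?_
    filter_upwards [h2] with r hr
    rw [Real.norm_eq_abs, abs_of_pos hr.1]; exact hr.2.le
  have hcov : ∫ r, r ∂G₁ = ∫ r, d r * r ∂G₂ := by
    rw [← MeasureTheory.integral_rnDeriv_smul hac₁ (f := fun r : ℝ => r)]
    refine integral_congr_ae ?_
    filter_upwards [htr] with r h1
    simp [h1]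
  have hm1 : ∫ r, r ∂G₁ = α - α * ∫ r, r ∂G₂ := by
    rw [hcov]
    have heq : ∫ r, d r * r ∂G₂ = ∫ r, α * (1 - r) ∂G₂ := by
      refine integral_congr_ae ?_
      filter_upwards [h2] with r hr
      show α * ((1 - r) / r) * r = α * (1 - r)
      rw [mul_assoc, div_mul_cancel₀ _ (ne_of_gt hr.1)]
    rw [heq, integral_const_mul, integral_sub (integrable_const 1) hr_int₂]
    simp [mul_sub]
  have hinv_ae : (fun r : ℝ => 1 / r) =ᵐ[G₂] fun r => (d r + α) / α := by
    filter_upwards [h2] with r hr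
    show (1 : ℝ) / r = (α * ((1 - r) / r) + α) / α
    field_simp [ne_of_gt hr.1]
    ring
  have hinv_int : Integrable (fun r : ℝ => 1 / r) G₂ :=
    Integrable.congr ((hd_int.add (integrable_const α)).div_const α) hinv_ae.symm
  have hinv_val : ∫ r, (1:ℝ) / r ∂G₂ = (1 + α) / α := by
    rw [integral_congr_ae hinv_ae, integral_div,
      integral_add hd_int (integrable_const α), hd_sum]
    simp
  set m₂ : ℝ := ∫ r, r ∂G₂ with hm₂
  set t : ℝ := α / (α + 1) with ht_def
  have hα1 : (0:ℝ) < α + 1 := by linarith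
  have ht_pos : 0 < t := div_pos hα hα1
  have hψ_ae : (fun r : ℝ => (r - t)^2 / r) =ᵐ[G₂]
      fun r => (r + t^2 * (1/r)) + (-(2*t)) := by
    filter_upwards [h2] with r hr
    field_simp [ne_of_gt hr.1]
    ring
  have hA : Integrable (fun r : ℝ => r + t^2 * (1/r)) G₂ :=
    hr_int₂.add (hinv_int.const_mul (t^2))
  have hψ_int : Integrable (fun r : ℝ => (r - t)^2 / r) G₂ := by
    refine Integrable.congr ?_ hψ_ae.symm
    exact hA.add (integrable_const _)
  have hψ_val : ∫ r, (r - t)^2 / r ∂G₂ = m₂ - t := by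
    rw [integral_congr_ae hψ_ae,
      integral_add hA (integrable_const (-(2*t))),
      integral_add hr_int₂ (hinv_int.const_mul (t^2)), integral_const_mul, hinv_val,
      integral_const]
    have h3 : t^2 * ((1+α)/α) = t := by
      rw [ht_def]; field_simp; ring
    simp only [measure_univ, probReal_univ, ENNReal.toReal_one, smul_eq_mul, one_mul]
    rw [h3, ← hm₂]; ring
  have hψ_nonneg : ∀ᵐ r ∂G₂, 0 ≤ (r - t)^2 / r := by
    filter_upwards [h2] with r hr
    exact div_nonneg (sq_nonneg _) hr.1.le
  have hge : 0 ≤ m₂ - t := hψ_val ▸ integral_nonneg_of_ae hψ_nonneg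
  have hne' : m₂ ≠ t := by
    intro heq
    have hzero : ∫ r, (r - t)^2 / r ∂G₂ = 0 := by rw [hψ_val, heq, sub_self]
    have haezero : (fun r : ℝ => (r - t)^2 / r) =ᵐ[G₂] 0 :=
      (integral_eq_zero_iff_of_nonneg_ae hψ_nonneg hψ_int).mp hzero
    have hrt : ∀ᵐ r ∂G₂, r = t := by
      filter_upwards [haezero, h2] with r h0 hr
      have h0' : (r - t)^2 / r = 0 := h0
      rw [div_eq_zero_iff] at h0'
      rcases h0' with h | h
      · have := (pow_eq_zero_iff (by norm_num : (2:ℕ) ≠ 0)).mp h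
        linarith
      · exact absurd h (ne_of_gt hr.1)
    have hrn1 : G₁.rnDeriv G₂ =ᵐ[G₂] 1 := by
      filter_upwards [hrn, hrt] with r h1 h2'
      rw [h1, h2']
      have hdt : α * ((1 - t) / t) = 1 := by
        rw [ht_def]
        field_simp
        ring
      simp only [Pi.one_apply]
      rw [hdt, ENNReal.ofReal_one]
    have : G₁ = G₂ := by
      rw [← Measure.withDensity_rnDeriv_eq G₁ G₂ hac₁, withDensity_congr_ae hrn1,
        withDensity_one]
    exact hne this
  have hlt : t < m₂ := lt_of_le_of_ne (by linarith) (Ne.symm hne')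
  rw [hm1]
  have hkey : α < m₂ * (α + 1) := (div_lt_iff₀ hα1).mp hlt
  nlinarith
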